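/- Let F be a cover of a discrete box K of dimension n such that every subset of K of diameter ≤ 1 meets at most n elements of F, and let U be the refinement of F into E-chain-components (where E relates points at distance ≤ 1). Then for every point x of the continuous box K̃ = ∏ᵢ[0,kᵢ−1], at most n members U ∈ U satisfy d̃(x, U) ≤ 1/2. -/

import Mathlib

/-- In the discrete box `∀ i, Fin (k i)` with the sup-metric
`d(x,y) = max_i |x i - y i|`, the relation `d(x,y) ≤ 1`. -/
def adj {n : ℕ} {k : Fin n → ℕ} (x y : ∀ i, Fin (k i)) : Prop :=
  ∀ i, |(x i : ℤ) - (y i : ℤ)| ≤ 1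

/-- A subset `F` of the discrete box connects two opposite faces: for some
coordinate `i` there is a chain in `F` with consecutive distances `≤ 1`
from the face `x i = 0` to the face `x i = k i - 1`. -/
def Connects {n : ℕ} {k : Fin n → ℕ} (F : Set (∀ i, Fin (k i))) : Prop :=
  ∃ i : Fin n, ∃ m : ℕ, ∃ c : Fin (m + 1) → ∀ j, Fin (k j),
    (∀ j, c j ∈ F) ∧ (c 0 i : ℕ) = 0 ∧ (c (Fin.last m) i : ℕ) = k i - 1 ∧
    ∀ j : Fin m, adj (c j.castSucc) (c j.succ)

/-- The `E`-chain component of `x` inside `F`: all `y ∈ F` reachable from `x`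
by a chain in `F` with consecutive pairs in `E`. -/
def EClass {X : Type*} (E : Set (X × X)) (F : Set X) (x : X) : Set X :=
  {y | y ∈ F ∧ ∃ m : ℕ, ∃ c : Fin (m + 1) → X, (∀ j, c j ∈ F) ∧ c 0 = x ∧
    c (Fin.last m) = y ∧ ∀ j : Fin m, (c (j.castSucc), c (j.succ)) ∈ E}

open Set

section aux
variable {X : Type*} (E : Set (X × X)) (F : Set X)

def Rrel : X → X → Prop := fun p q => p ∈ F ∧ q ∈ F ∧ (p, q) ∈ E

lemma chain_to_rtg : ∀ (m : ℕ) (c : Fin (m + 1) → X), (∀ j, c j ∈ F) →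
    (∀ j : Fin m, (c j.castSucc, c j.succ) ∈ E) →
    Relation.ReflTransGen (Rrel E F) (c 0) (c (Fin.last m)) := by
  intro m
  induction m with
  | zero => intro c _ _; exact Relation.ReflTransGen.refl
  | succ m ih =>
    intro c hc hstep
    have h1 := ih (c ∘ Fin.castSucc) (fun j => hc _) (fun j => by
      have := hstep j.castSucc
      rw [Fin.succ_castSucc] at this; exact this)
    have h2 : Rrel E F (c (Fin.last m).castSucc) (c (Fin.last m).succ) :=
      ⟨hc _, hc _, hstep (Fin.last m)⟩
    have h3 := h1.tail h2
    simpa [Fin.succ_last] using h3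

lemma rtg_to_chain {x y : X} (hx : x ∈ F) (h : Relation.ReflTransGen (Rrel E F) x y) :
    y ∈ F ∧ ∃ m : ℕ, ∃ c : Fin (m + 1) → X, (∀ j, c j ∈ F) ∧ c 0 = x ∧
      c (Fin.last m) = y ∧ ∀ j : Fin m, (c (j.castSucc), c (j.succ)) ∈ E := by
  induction h with
  | refl =>
    exact ⟨hx, 0, fun _ => x, fun _ => hx, rfl, rfl, fun j => absurd j.2 (by omega)⟩
  | @tail b z hab hbz ih =>
    obtain ⟨hbF, m, c, hc, h0, hl, hstep⟩ := ih
    refine ⟨hbz.2.1, m + 1, Fin.snoc c z, ?_, ?_, ?_, ?_⟩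
    · intro j
      induction j using Fin.lastCases with
      | last => simpa using hbz.2.1
      | cast i => simpa using hc i
    · have : (0 : Fin (m + 2)) = (0 : Fin (m+1)).castSucc := rfl
      rw [this, Fin.snoc_castSucc, h0]
    · simp
    · intro j
      induction j using Fin.lastCases with
      | last =>
        rw [Fin.succ_last, Fin.snoc_last, Fin.snoc_castSucc, hl]
        exact hbz.2.2
      | cast i =>
        rw [Fin.succ_castSucc, Fin.snoc_castSucc, Fin.snoc_castSucc]
        exact hstep i

lemma mem_eclass_iff {x y : X} (hx : x ∈ F) :
    y ∈ EClass E F x ↔ y ∈ F ∧ Relation.ReflTransGen (Rrel E F) x y := by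
  constructor
  · rintro ⟨hyF, m, c, hc, h0, hl, hstep⟩
    refine ⟨hyF, ?_⟩
    have := chain_to_rtg E F m c hc hstep
    rwa [h0, hl] at this
  · rintro ⟨hyF, h⟩
    exact ⟨hyF, (rtg_to_chain E F hx h).2⟩

lemma eclass_eq {a a' u u' : X} (hsymm : ∀ p q : X, (p, q) ∈ E → (q, p) ∈ E)
    (ha : a ∈ F) (ha' : a' ∈ F) (hu : u ∈ EClass E F a) (hu' : u' ∈ EClass E F a')
    (huu' : (u, u') ∈ E) : EClass E F a = EClass E F a' := by
  have hsym : Symmetric (Rrel E F) := fun p q hpq => ⟨hpq.2.1, hpq.1, hsymm _ _ hpq.2.2⟩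
  have hsymt : Symmetric (Relation.ReflTransGen (Rrel E F)) :=
    fun _ _ h => by
      induction h with
      | refl => exact Relation.ReflTransGen.refl
      | tail _ hbc ih => exact (Relation.ReflTransGen.single (hsym hbc)).trans ih
  have h1 := ((mem_eclass_iff E F ha).1 hu)
  have h2 := ((mem_eclass_iff E F ha').1 hu')
  have haa' : Relation.ReflTransGen (Rrel E F) a a' :=
    (h1.2.tail ⟨h1.1, h2.1, huu'⟩).trans (hsymt h2.2)
  ext y
  rw [mem_eclass_iff E F ha, mem_eclass_iff E F ha']
  exact ⟨fun hy => ⟨hy.1, (hsymt haa').trans hy.2⟩, fun hy => ⟨hy.1, haa'.trans hy.2⟩⟩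

lemma count_aux {X : Type*} (E : Set (X × X)) (hsymm : ∀ p q : X, (p, q) ∈ E → (q, p) ∈ E)
    (𝓕 : Set (Set X)) (B : Set X) (hB : ∀ u ∈ B, ∀ v ∈ B, (u, v) ∈ E) :
    {U : Set X | (∃ F ∈ 𝓕, ∃ a ∈ F, U = EClass E F a) ∧ ∃ u ∈ U, u ∈ B}.encard ≤
      {F ∈ 𝓕 | (F ∩ B).Nonempty}.encard := by
  classical
  set S : Set (Set X) := {U | (∃ F ∈ 𝓕, ∃ a ∈ F, U = EClass E F a) ∧ ∃ u ∈ U, u ∈ B}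
    with hSdef
  set f : Set X → Set X := fun U => if h : U ∈ S then h.1.choose else ∅ with hfdef
  have hf : ∀ U (hU : U ∈ S), f U ∈ 𝓕 ∧ ∃ a ∈ f U, U = EClass E (f U) a := by
    intro U hU
    simp only [hfdef, dif_pos hU]
    exact hU.1.choose_spec
  have hsub : ∀ U ∈ S, U ⊆ f U := by
    intro U hU
    obtain ⟨-, a, ha, hUeq⟩ := hf U hU
    intro y hy
    rw [hUeq] at hy
    exact hy.1
  have himg : f '' S ⊆ {F ∈ 𝓕 | (F ∩ B).Nonempty} := by
    rintro _ ⟨U, hU, rfl⟩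
    obtain ⟨u, huU, huB⟩ := hU.2
    exact ⟨(hf U hU).1, u, hsub U hU huU, huB⟩
  have hinj : Set.InjOn f S := by
    intro U hU U' hU' heq
    obtain ⟨-, a, ha, hUeq⟩ := hf U hU
    obtain ⟨-, a', ha', hU'eq⟩ := hf U' hU'
    rw [heq] at hUeq ha
    obtain ⟨u, huU, huB⟩ := hU.2
    obtain ⟨u', hu'U, hu'B⟩ := hU'.2
    have := eclass_eq E (f U') hsymm ha ha'
      (hUeq ▸ huU) (hU'eq ▸ hu'U) (hB u huB u' hu'B)
    exact hUeq.trans (this.trans hU'eq.symm)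
  calc S.encard = (f '' S).encard := (hinj.encard_image).symm
    _ ≤ _ := Set.encard_mono himg

end aux

theorem chain_components_multiplicity {n : ℕ} {k : Fin n → ℕ} (hk : ∀ i, 0 < k i)
    (𝓕 : Set (Set (∀ i, Fin (k i)))) (hcov : ⋃₀ 𝓕 = univ)
    (hloc : ∀ B : Set (∀ i, Fin (k i)), (∀ x ∈ B, ∀ y ∈ B, adj x y) →
      {F ∈ 𝓕 | (F ∩ B).Nonempty}.encard ≤ (n : ℕ∞))
    (x : Fin n → ℝ) (hx : ∀ i, x i ∈ Icc (0 : ℝ) ((k i : ℝ) - 1)) :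
    {U : Set (∀ i, Fin (k i)) |
        (∃ F ∈ 𝓕, ∃ a ∈ F, U = EClass {p | adj p.1 p.2} F a) ∧
        ∃ u ∈ U, ∀ i, |x i - (u i : ℝ)| ≤ 1 / 2}.encard ≤ (n : ℕ∞) := by
  classical
  have hB : ∀ u ∈ {u : ∀ i, Fin (k i) | ∀ i, |x i - (u i : ℝ)| ≤ 1 / 2},
      ∀ v ∈ {u : ∀ i, Fin (k i) | ∀ i, |x i - (u i : ℝ)| ≤ 1 / 2}, adj u v := by
    intro u hu v hv i
    have h1 := hu i
    have h2 := hv i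
    have h3 : |(u i : ℝ) - (v i : ℝ)| ≤ 1 := by
      calc |(u i : ℝ) - (v i : ℝ)| ≤ |(u i : ℝ) - x i| + |x i - (v i : ℝ)| :=
            abs_sub_le _ _ _
        _ = |x i - (u i : ℝ)| + |x i - (v i : ℝ)| := by rw [abs_sub_comm]
        _ ≤ 1/2 + 1/2 := add_le_add h1 h2
        _ = 1 := by norm_num
    have h4 : |((u i : ℤ) : ℝ) - ((v i : ℤ) : ℝ)| ≤ 1 := by push_cast; exact_mod_cast h3
    rw [← Int.cast_sub, ← Int.cast_abs] at h4
    exact_mod_cast h4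
  have hsymm : ∀ p q : (∀ i, Fin (k i)),
      (p, q) ∈ {p : (∀ i, Fin (k i)) × (∀ i, Fin (k i)) | adj p.1 p.2} →
      (q, p) ∈ {p : (∀ i, Fin (k i)) × (∀ i, Fin (k i)) | adj p.1 p.2} := by
    intro p q hpq i
    rw [abs_sub_comm]
    exact hpq i
  have key := count_aux {p : (∀ i, Fin (k i)) × (∀ i, Fin (k i)) | adj p.1 p.2} hsymm 𝓕
    {u : ∀ i, Fin (k i) | ∀ i, |x i - (u i : ℝ)| ≤ 1 / 2} hB
  exact key.trans (hloc _ hB)
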